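/- Let χ_m be the Haar probability measure on U(m) and for ψ ∈ (ℂ^m)^{⊙n} put ψ_ζ(u) = ⟨(u e_1)^{⊗n} ∣ ψ⟩. Then for all ψ, φ ∈ (ℂ^m)^{⊙n}: C(n+m-1, n) · ∫_{U(m)} φ_ζ(u) · conj(ψ_ζ(u)) dχ_m(u) = ⟨ψ ∣ φ⟩. -/

import Mathlib

/-- A model of the completed `n`-th *symmetric* tensor power `E^{⊙n}` of a complex
inner ℂ product space `E`: a space `T` with a map `tpow : x ↦ x^{⊗n}` satisfying
`⟨x^{⊗n}, y^{⊗n}⟩ = ⟨x,y⟩ⁿ`, the diagonal tensors being total in `T`. -/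
structure SymPowModel (E : Type) [NormedAddCommGroup E] [InnerProductSpace ℂ E]
    (n : ℕ) (T : Type) [NormedAddCommGroup T] [InnerProductSpace ℂ T] where
  tpow : E → T
  inner_tpow : ∀ x y : E, (inner ℂ (tpow x) (tpow y) : ℂ) = (inner ℂ x y : ℂ) ^ n
  total : (Submodule.span ℂ (Set.range tpow)).topologicalClosure = ⊤

open MeasureTheory

section AuxiliaryLemmas
open Finset Filter

noncomputable section

namespace AvgProof


variable {m n : ℕ} {T : Type} [NormedAddCommGroup T] [InnerProductSpace ℂ T]

lemma norm_tpow (M : SymPowModel (EuclideanSpace ℂ (Fin m)) n T)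
    (x : EuclideanSpace ℂ (Fin m)) : ‖M.tpow x‖ = ‖x‖ ^ n := by
  have h := M.inner_tpow x x
  have ha : (inner ℂ (M.tpow x) (M.tpow x) : ℂ) = ((‖M.tpow x‖ ^ 2 : ℝ) : ℂ) := by
    exact_mod_cast @inner_self_eq_norm_sq_to_K ℂ _ _ _ _ (M.tpow x)
  have hb : (inner ℂ x x : ℂ) = ((‖x‖ ^ 2 : ℝ) : ℂ) := by
    exact_mod_cast @inner_self_eq_norm_sq_to_K ℂ _ _ _ _ x
  rw [ha, hb] at h
  have h3 : ‖M.tpow x‖ ^ 2 = (‖x‖ ^ n) ^ 2 := by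
    have : ((‖M.tpow x‖ ^ 2 : ℝ) : ℂ) = (((‖x‖ ^ n) ^ 2 : ℝ) : ℂ) := by
      rw [h]; push_cast; ring
    exact_mod_cast this
  have h4 := congrArg Real.sqrt h3
  rwa [Real.sqrt_sq (norm_nonneg _), Real.sqrt_sq (by positivity)] at h4

lemma continuous_tpow (M : SymPowModel (EuclideanSpace ℂ (Fin m)) n T) :
    Continuous M.tpow := by
  rw [continuous_iff_continuousAt]
  intro x
  rw [ContinuousAt, tendsto_iff_dist_tendsto_zero]
  have hd : ∀ y, dist (M.tpow y) (M.tpow x)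
      = Real.sqrt ((‖y‖ ^ n) ^ 2 - 2 * ((inner ℂ y x : ℂ) ^ n).re + (‖x‖ ^ n) ^ 2) := by
    intro y
    rw [dist_eq_norm]
    rw [← Real.sqrt_sq (norm_nonneg (M.tpow y - M.tpow x))]
    congr 1
    have h := @norm_sub_sq ℂ _ _ _ _ (M.tpow y) (M.tpow x)
    rw [h, M.inner_tpow, norm_tpow, norm_tpow, RCLike.re_to_complex]
  simp only [hd]
  have h1 : Tendsto (fun y : EuclideanSpace ℂ (Fin m) =>
      (‖y‖ ^ n) ^ 2 - 2 * ((inner ℂ y x : ℂ) ^ n).re + (‖x‖ ^ n) ^ 2) (nhds x)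
      (nhds ((‖x‖ ^ n) ^ 2 - 2 * ((inner ℂ x x : ℂ) ^ n).re + (‖x‖ ^ n) ^ 2)) := by
    refine Tendsto.add (Tendsto.sub ?_ ?_) tendsto_const_nhds
    · exact ((continuous_norm.pow n).pow 2).tendsto x
    · refine Tendsto.const_mul _ ?_
      exact (Complex.continuous_re.comp
        (((continuous_id.inner continuous_const).pow n))).tendsto x
  have hx0 : (‖x‖ ^ n) ^ 2 - 2 * ((inner ℂ x x : ℂ) ^ n).re + (‖x‖ ^ n) ^ 2 = 0 := by
    have hb : (inner ℂ x x : ℂ) = ((‖x‖ ^ 2 : ℝ) : ℂ) := by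
      exact_mod_cast @inner_self_eq_norm_sq_to_K ℂ _ _ _ _ x
    rw [hb, ← Complex.ofReal_pow, Complex.ofReal_re]
    ring
  rw [hx0] at h1
  have h6 := (Real.continuous_sqrt.tendsto 0).comp h1
  rw [Real.sqrt_zero] at h6
  exact h6



variable {m n : ℕ}

abbrev UG (m : ℕ) := Matrix.unitaryGroup (Fin m) ℂ

def mact (A : Matrix (Fin m) (Fin m) ℂ) (v : EuclideanSpace ℂ (Fin m)) :
    EuclideanSpace ℂ (Fin m) := Matrix.toEuclideanLin A v

lemma mact_mul (A B : Matrix (Fin m) (Fin m) ℂ) (v : EuclideanSpace ℂ (Fin m)) :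
    mact (A * B) v = mact A (mact B v) := by
  simp only [mact, Matrix.toEuclideanLin_apply]
  ext i
  simp [Matrix.mulVec_mulVec]

lemma mact_one (v : EuclideanSpace ℂ (Fin m)) : mact 1 v = v := by
  simp only [mact, Matrix.toEuclideanLin_apply]
  ext i
  simp

lemma inner_mact_unitary (u : UG m) (v w : EuclideanSpace ℂ (Fin m)) :
    (inner ℂ (mact (↑u) v) (mact (↑u) w) : ℂ) = inner ℂ v w := by
  have h1 : (inner ℂ v (mact ((star u : Matrix (Fin m) (Fin m) ℂ) * (↑u : Matrix (Fin m) (Fin m) ℂ)) w) : ℂ) = inner ℂ (mact (↑u) v) (mact (↑u) w) := by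
    rw [mact_mul]
    show (inner ℂ v ((Matrix.toEuclideanLin (star u : Matrix (Fin m) (Fin m) ℂ))
      ((Matrix.toEuclideanLin (↑u)) w)) : ℂ) = _
    have hadj : Matrix.toEuclideanLin (star u : Matrix (Fin m) (Fin m) ℂ)
        = LinearMap.adjoint (Matrix.toEuclideanLin (↑u : Matrix (Fin m) (Fin m) ℂ)) := by
      rw [← Matrix.toEuclideanLin_conjTranspose_eq_adjoint]
      rfl
    rw [hadj]
    exact LinearMap.adjoint_inner_right _ _ _
  rw [← h1]
  have h2 : (star u : Matrix (Fin m) (Fin m) ℂ) * (↑u : Matrix (Fin m) (Fin m) ℂ) = 1 :=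
    Matrix.UnitaryGroup.star_mul_self u
  rw [h2, mact_one]

lemma norm_mact_unitary (u : UG m) (v : EuclideanSpace ℂ (Fin m)) :
    ‖mact (↑u) v‖ = ‖v‖ := by
  have h := inner_mact_unitary u v v
  rw [@inner_self_eq_norm_sq_to_K ℂ, @inner_self_eq_norm_sq_to_K ℂ] at h
  have h2 : (‖mact (↑u) v‖ : ℝ) ^ 2 = (‖v‖ : ℝ) ^ 2 := by exact_mod_cast h
  have h4 := congrArg Real.sqrt h2
  rwa [Real.sqrt_sq (norm_nonneg _), Real.sqrt_sq (norm_nonneg _)] at h4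

def e1 (hm : 0 < m) : EuclideanSpace ℂ (Fin m) := EuclideanSpace.single (⟨0, hm⟩ : Fin m) 1

def zeta (hm : 0 < m) (u : UG m) : EuclideanSpace ℂ (Fin m) := mact (↑u) (e1 hm)

lemma norm_e1 (hm : 0 < m) : ‖e1 hm‖ = 1 := by
  simp [e1, EuclideanSpace.norm_single]

lemma norm_zeta (hm : 0 < m) (u : UG m) : ‖zeta hm u‖ = 1 := by
  rw [zeta, norm_mact_unitary, norm_e1]

lemma continuous_mact_e1 (hm : 0 < m) :
    Continuous fun A : Matrix (Fin m) (Fin m) ℂ => mact A (e1 hm) := by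
  simp only [mact, Matrix.toEuclideanLin_apply]
  refine Continuous.comp (PiLp.continuous_toLp 2 fun _ : Fin m => ℂ) ?_
  refine continuous_pi fun i => ?_
  unfold Matrix.mulVec dotProduct
  refine continuous_finset_sum _ fun j _ => ?_
  exact (continuous_id.matrix_elem i j).mul continuous_const

lemma continuous_zeta (hm : 0 < m) : Continuous (zeta hm) :=
  (continuous_mact_e1 hm).comp continuous_subtype_val

lemma continuous_mul_left (g : UG m) : Continuous fun u : UG m => g * u := by
  refine Continuous.subtype_mk ?_ _
  show Continuous fun u : UG m => ((g : Matrix (Fin m) (Fin m) ℂ) * (u : Matrix (Fin m) (Fin m) ℂ))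
  exact continuous_const.mul continuous_subtype_val

lemma zeta_mul (hm : 0 < m) (g u : UG m) :
    zeta hm (g * u) = mact (↑g) (zeta hm u) := by
  rw [zeta, zeta, ← mact_mul]
  rfl

lemma exists_unitary (hm : 0 < m) (v : EuclideanSpace ℂ (Fin m)) (hv : ‖v‖ = 1) :
    ∃ u : UG m, zeta hm u = v := by
  classical
  set j0 : Fin m := ⟨0, hm⟩
  have hcard : Module.finrank ℂ (EuclideanSpace ℂ (Fin m)) = Fintype.card (Fin m) := by
    simp [finrank_euclideanSpace]
  have horth : Orthonormal ℂ (({j0} : Set (Fin m)).restrict fun _ => v) := by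
    constructor
    · intro i; exact hv
    · intro i j hij
      exact absurd (Subtype.ext (i.2.trans j.2.symm)) hij
  obtain ⟨b, hb⟩ := horth.exists_orthonormalBasis_extension_of_card_eq hcard
  have hbj0 : b j0 = v := hb j0 rfl
  set g : Matrix (Fin m) (Fin m) ℂ := Matrix.of fun i j => (b j) i with hg
  have hmem : g ∈ Matrix.unitaryGroup (Fin m) ℂ := by
    rw [Matrix.mem_unitaryGroup_iff']
    ext i j
    have : (star g * g) i j = ∑ k, (starRingEnd ℂ) ((b i) k) * (b j) k := by
      simp [Matrix.mul_apply, Matrix.star_apply, hg]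
    rw [this]
    have hinner : (inner ℂ (b i) (b j) : ℂ) = ∑ k, (starRingEnd ℂ) ((b i) k) * (b j) k := by
      rw [PiLp.inner_apply]
      exact Finset.sum_congr rfl fun k _ => by rw [RCLike.inner_apply]; ring
    rw [← hinner, orthonormal_iff_ite.mp b.orthonormal i j, Matrix.one_apply]
  refine ⟨⟨g, hmem⟩, ?_⟩
  rw [← hbj0]
  show mact g (e1 hm) = b j0
  simp only [mact, Matrix.toEuclideanLin_apply]
  ext i
  have he1 : (e1 hm).ofLp = Pi.single j0 1 := by
    rfl
  rw [he1, Matrix.mulVec_single]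
  simp [hg]



lemma enc_inj : ∀ (m B : ℕ) (α β : Fin m → ℕ), (∀ j, α j < B) → (∀ j, β j < B) →
    (∑ j, α j * B ^ (j : ℕ)) = (∑ j, β j * B ^ (j : ℕ)) → α = β := by
  intro m
  induction m with
  | zero => intro B α β _ _ _; funext j; exact absurd j.2 (Nat.not_lt_zero _)
  | succ m ih =>
    intro B α β hα hβ h
    have hB : 0 < B := Nat.pos_of_ne_zero fun h0 => by simp [h0] at hα
    rw [Fin.sum_univ_succ, Fin.sum_univ_succ] at h
    have hrw : ∀ γ : Fin (m + 1) → ℕ, (∑ j : Fin m, γ j.succ * B ^ (j.succ : ℕ))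
        = B * ∑ j : Fin m, γ j.succ * B ^ (j : ℕ) := by
      intro γ
      rw [Finset.mul_sum]
      refine Finset.sum_congr rfl fun j _ => ?_
      have : (j.succ : ℕ) = (j : ℕ) + 1 := rfl
      rw [this, pow_succ]
      ring
    rw [hrw α, hrw β] at h
    have h0 : α 0 = β 0 := by
      have h1 := congrArg (· % B) h
      simpa [Nat.add_mul_mod_self_left, Nat.mod_eq_of_lt (hα 0), Nat.mod_eq_of_lt (hβ 0),
        Nat.mul_mod_right, Nat.add_mod] using h1
    rw [h0] at h
    have h2 : (∑ j : Fin m, α j.succ * B ^ (j : ℕ)) = ∑ j : Fin m, β j.succ * B ^ (j : ℕ) :=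
      Nat.eq_of_mul_eq_mul_left hB (Nat.add_left_cancel h)
    have h3 := ih B (fun j => α j.succ) (fun j => β j.succ) (fun j => hα j.succ)
      (fun j => hβ j.succ) h2
    funext j
    refine Fin.cases ?_ ?_ j
    · exact h0
    · intro i; exact congrFun h3 i

lemma extract {m : ℕ} (s : Finset (Fin m → ℕ)) (B : ℕ) (hB : ∀ α ∈ s, ∀ j, α j < B)
    (q : (Fin m → ℕ) → ℂ)
    (h : ∀ r : Fin m → ℝ, (∀ j, 0 ≤ r j) → ∑ α ∈ s, q α * ∏ j, ((r j : ℂ)) ^ α j = 0) :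
    ∀ α ∈ s, q α = 0 := by
  classical
  set enc : (Fin m → ℕ) → ℕ := fun α => ∑ j, α j * B ^ (j : ℕ) with henc
  set P : Polynomial ℂ := ∑ α ∈ s, Polynomial.C (q α) * Polynomial.X ^ enc α with hP
  have heval : ∀ t : ℝ, 0 ≤ t → P.eval (t : ℂ) = 0 := by
    intro t ht
    rw [hP, Polynomial.eval_finset_sum]
    simp only [Polynomial.eval_mul, Polynomial.eval_C, Polynomial.eval_pow, Polynomial.eval_X]
    have := h (fun j => t ^ (B ^ (j : ℕ))) (fun j => pow_nonneg ht _)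
    rw [← this]
    refine Finset.sum_congr rfl fun α hα => ?_
    congr 1
    rw [← Finset.prod_pow_eq_pow_sum]
    refine Finset.prod_congr rfl fun j _ => ?_
    push_cast
    rw [← pow_mul, mul_comm (α j) (B ^ (j:ℕ))]
  have hPzero : P = 0 := by
    refine Polynomial.eq_zero_of_infinite_isRoot P ?_
    refine Set.Infinite.mono ?_ ((Set.Ici_infinite (0:ℝ)).image
      (Complex.ofReal_injective.injOn))
    rintro z ⟨t, ht, rfl⟩
    exact heval t ht
  intro α hα
  have hco := congrArg (fun p => Polynomial.coeff p (enc α)) hPzero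
  simp only [hP, Polynomial.finset_sum_coeff, Polynomial.coeff_zero] at hco
  rw [← hco]
  rw [Finset.sum_eq_single α]
  · simp
  · intro β hβ hne
    have : enc β ≠ enc α := by
      intro he
      exact hne (enc_inj m B β α (hB β hβ) (hB α hα) he)
    simp [Polynomial.coeff_C_mul, Polynomial.coeff_X_pow, if_neg (Ne.symm this)]
  · intro hcon; exact absurd hα hcon


section Core

variable (hm : 0 < m) [MeasurableSpace (UG m)] [BorelSpace (UG m)]
variable (μ : Measure (UG m)) [IsProbabilityMeasure μ]

lemma integrable_comp (f : EuclideanSpace ℂ (Fin m) → ℂ) (hf : Continuous f) :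
    Integrable (fun u => f (zeta hm u)) μ := by
  obtain ⟨C, hC⟩ := (isCompact_sphere (0 : EuclideanSpace ℂ (Fin m)) 1).exists_bound_of_continuousOn
    hf.continuousOn
  refine (integrable_const C).mono' ((hf.comp (continuous_zeta hm)).aestronglyMeasurable) ?_
  refine Filter.Eventually.of_forall fun u => ?_
  exact hC _ (by simp [mem_sphere_zero_iff_norm, norm_zeta hm u])

lemma int_invariance (hinv : ∀ g : UG m, μ.map (fun u => g * u) = μ) (g : UG m)
    (f : EuclideanSpace ℂ (Fin m) → ℂ) (hf : Continuous f) :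
    ∫ u, f (mact (↑g) (zeta hm u)) ∂μ = ∫ u, f (zeta hm u) ∂μ := by
  have hc : Continuous fun u : UG m => f (zeta hm u) := hf.comp (continuous_zeta hm)
  conv_rhs => rw [← hinv g]
  rw [integral_map (continuous_mul_left g).aemeasurable hc.aestronglyMeasurable]
  refine integral_congr_ae (Filter.Eventually.of_forall fun u => ?_)
  show f (mact (↑g) (zeta hm u)) = f (zeta hm (g * u))
  rw [zeta_mul]

def Jint (x y : EuclideanSpace ℂ (Fin m)) : ℂ :=
  ∫ u, (inner ℂ y (zeta hm u) : ℂ) ^ n * (inner ℂ (zeta hm u) x : ℂ) ^ n ∂μ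

def cpow (α : Fin m → ℕ) (v : Fin m → ℂ) : ℂ := ∏ j, v j ^ α j

def coords (z : EuclideanSpace ℂ (Fin m)) : Fin m → ℂ := fun j => z j

def cconj (z : EuclideanSpace ℂ (Fin m)) : Fin m → ℂ := fun j => (starRingEnd ℂ) (z j)

lemma continuous_coords_apply (j : Fin m) :
    Continuous fun z : EuclideanSpace ℂ (Fin m) => coords z j := by
  exact (continuous_apply j).comp (PiLp.continuous_ofLp 2 fun _ : Fin m => ℂ)

lemma continuous_cpow (α : Fin m → ℕ) :
    Continuous fun z : EuclideanSpace ℂ (Fin m) => cpow α (coords z) := by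
  refine continuous_finset_prod _ fun j _ => ?_
  exact (continuous_coords_apply j).pow _

lemma cpow_cconj (α : Fin m → ℕ) (z : EuclideanSpace ℂ (Fin m)) :
    cpow α (cconj z) = (starRingEnd ℂ) (cpow α (coords z)) := by
  simp [cpow, cconj, coords, map_prod, map_pow]

def Mo (α β : Fin m → ℕ) : ℂ :=
  ∫ u, cpow α (coords (zeta hm u)) * (starRingEnd ℂ) (cpow β (coords (zeta hm u))) ∂μ

lemma inner_pow_expand (y z : EuclideanSpace ℂ (Fin m)) :
    (inner ℂ y z : ℂ) ^ n = ∑ α ∈ piAntidiag (univ : Finset (Fin m)) n,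
      (Nat.multinomial univ α : ℂ) * (cpow α (cconj y) * cpow α (coords z)) := by
  have h : (inner ℂ y z : ℂ) = ∑ j, cconj y j * coords z j := by
    rw [PiLp.inner_apply]
    exact Finset.sum_congr rfl fun j _ => by rw [RCLike.inner_apply]; simp only [cconj, coords]; ring
  rw [h, Finset.sum_pow_eq_sum_piAntidiag]
  refine Finset.sum_congr rfl fun α hα => ?_
  congr 1
  simp [cpow, mul_pow, Finset.prod_mul_distrib]

lemma J_expand (x y : EuclideanSpace ℂ (Fin m)) :
    Jint (n := n) hm μ x y = ∑ α ∈ piAntidiag (univ : Finset (Fin m)) n,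
      ∑ β ∈ piAntidiag (univ : Finset (Fin m)) n,
        ((Nat.multinomial univ α : ℂ) * cpow α (cconj y)) *
          ((Nat.multinomial univ β : ℂ) * cpow β (coords x)) * Mo hm μ α β := by
  have hpt : ∀ u : UG m, (inner ℂ y (zeta hm u) : ℂ) ^ n * (inner ℂ (zeta hm u) x : ℂ) ^ n
      = ∑ α ∈ piAntidiag (univ : Finset (Fin m)) n, ∑ β ∈ piAntidiag (univ : Finset (Fin m)) n,
        ((Nat.multinomial univ α : ℂ) * cpow α (cconj y)) *
          ((Nat.multinomial univ β : ℂ) * cpow β (coords x)) *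
          (cpow α (coords (zeta hm u)) * (starRingEnd ℂ) (cpow β (coords (zeta hm u)))) := by
    intro u
    rw [inner_pow_expand y (zeta hm u), inner_pow_expand (zeta hm u) x, Finset.sum_mul_sum]
    refine Finset.sum_congr rfl fun α hα => Finset.sum_congr rfl fun β hβ => ?_
    rw [cpow_cconj β (zeta hm u)]
    ring
  rw [Jint]
  rw [integral_congr_ae (Filter.Eventually.of_forall hpt)]
  rw [integral_finset_sum _ (fun α hα => ?_)]
  · refine Finset.sum_congr rfl fun α hα => ?_
    rw [integral_finset_sum _ (fun β hβ => ?_)]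
    · refine Finset.sum_congr rfl fun β hβ => ?_
      rw [Mo, ← integral_const_mul]
    · exact Integrable.const_mul (integrable_comp hm μ _
        (((continuous_cpow α).mul ((continuous_cpow β).star)))) _
  · refine integrable_finset_sum _ (fun β hβ => ?_)
    exact Integrable.const_mul (integrable_comp hm μ _
      (((continuous_cpow α).mul ((continuous_cpow β).star)))) _

lemma Mo_offdiag (hinv : ∀ g : UG m, μ.map (fun u => g * u) = μ)
    (α β : Fin m → ℕ) (hne : α ≠ β) : Mo hm μ α β = 0 := by
  classical
  obtain ⟨j0, hj0⟩ := Function.ne_iff.mp hne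
  set k : ℤ := (α j0 : ℤ) - (β j0 : ℤ) with hkdef
  have hk : k ≠ 0 := by
    rw [hkdef, sub_ne_zero]
    exact_mod_cast hj0
  set θ : ℝ := Real.pi / (k : ℝ) with hθ
  set z0 : ℂ := Complex.exp ((θ : ℂ) * Complex.I) with hz0def
  have hconj_z0 : (starRingEnd ℂ) z0 = Complex.exp (-((θ : ℂ) * Complex.I)) := by
    rw [hz0def, ← Complex.exp_conj]
    congr 1
    simp [Complex.conj_ofReal]
  set d : Fin m → ℂ := fun j => if j = j0 then z0 else 1 with hd
  have hmem : Matrix.diagonal d ∈ Matrix.unitaryGroup (Fin m) ℂ := by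
    have hdd : ∀ i, star (d i) * d i = 1 := by
      intro i
      show star (if i = j0 then z0 else 1) * (if i = j0 then z0 else 1) = 1
      by_cases hij : i = j0
      · rw [if_pos hij, RCLike.star_def, hconj_z0, hz0def, ← Complex.exp_add]
        simp
      · rw [if_neg hij]; simp
    rw [Matrix.mem_unitaryGroup_iff', Matrix.star_eq_conjTranspose,
      Matrix.diagonal_conjTranspose, Matrix.diagonal_mul_diagonal]
    ext i j
    rcases eq_or_ne i j with rfl | hij
    · simp only [Matrix.diagonal_apply_eq, Matrix.one_apply_eq, Pi.star_apply]
      exact hdd i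
    · rw [Matrix.diagonal_apply_ne _ hij, Matrix.one_apply_ne hij]
  set g : UG m := ⟨Matrix.diagonal d, hmem⟩ with hg
  have hcoords : ∀ z : EuclideanSpace ℂ (Fin m), ∀ j,
      coords (mact (↑g) z) j = d j * coords z j := by
    intro z j
    show (Matrix.toEuclideanLin (Matrix.diagonal d) z) j = d j * coords z j
    rw [Matrix.toEuclideanLin_apply]
    exact Matrix.mulVec_diagonal d _ j
  have hphase : z0 ^ (α j0) * (starRingEnd ℂ) (z0 ^ (β j0)) = -1 := by
    rw [map_pow, hconj_z0, hz0def, ← Complex.exp_nat_mul, ← Complex.exp_nat_mul,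
      ← Complex.exp_add]
    have harg : (α j0 : ℂ) * ((θ : ℂ) * Complex.I) + (β j0 : ℂ) * -((θ : ℂ) * Complex.I)
        = (Real.pi : ℂ) * Complex.I := by
      have hsub : (α j0 : ℂ) - (β j0 : ℂ) = (k : ℂ) := by push_cast [hkdef]; ring
      have hkc : (k : ℂ) ≠ 0 := by exact_mod_cast hk
      have hθc : (θ : ℂ) = (Real.pi : ℂ) / (k : ℂ) := by
        rw [hθ]; push_cast; ring
      rw [hθc]
      field_simp
      linear_combination hsub
    rw [harg, Complex.exp_pi_mul_I]
  have hF : Continuous fun z : EuclideanSpace ℂ (Fin m) =>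
      cpow α (coords z) * (starRingEnd ℂ) (cpow β (coords z)) :=
    (continuous_cpow α).mul ((continuous_cpow β).star)
  have hstep := int_invariance hm μ hinv g _ hF
  have hpt : ∀ u : UG m,
      cpow α (coords (mact (↑g) (zeta hm u))) *
        (starRingEnd ℂ) (cpow β (coords (mact (↑g) (zeta hm u))))
      = -(cpow α (coords (zeta hm u)) * (starRingEnd ℂ) (cpow β (coords (zeta hm u)))) := by
    intro u
    have h1 : cpow α (coords (mact (↑g) (zeta hm u)))
        = z0 ^ (α j0) * cpow α (coords (zeta hm u)) := by
      rw [cpow]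
      have : ∀ j, coords (mact (↑g) (zeta hm u)) j ^ α j
          = d j ^ α j * coords (zeta hm u) j ^ α j := by
        intro j; rw [hcoords, mul_pow]
      rw [Finset.prod_congr rfl fun j _ => this j, Finset.prod_mul_distrib]
      congr 1
      rw [Finset.prod_eq_single j0 (fun j _ hj => by simp [hd, hj]) (by simp)]
      simp [hd]
    have h2 : cpow β (coords (mact (↑g) (zeta hm u)))
        = z0 ^ (β j0) * cpow β (coords (zeta hm u)) := by
      rw [cpow]
      have : ∀ j, coords (mact (↑g) (zeta hm u)) j ^ β j
          = d j ^ β j * coords (zeta hm u) j ^ β j := by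
        intro j; rw [hcoords, mul_pow]
      rw [Finset.prod_congr rfl fun j _ => this j, Finset.prod_mul_distrib]
      congr 1
      rw [Finset.prod_eq_single j0 (fun j _ hj => by simp [hd, hj]) (by simp)]
      simp [hd]
    rw [h1, h2, map_mul]
    have : z0 ^ α j0 * cpow α (coords (zeta hm u)) *
        ((starRingEnd ℂ) (z0 ^ β j0) * (starRingEnd ℂ) (cpow β (coords (zeta hm u))))
        = (z0 ^ α j0 * (starRingEnd ℂ) (z0 ^ β j0)) *
          (cpow α (coords (zeta hm u)) * (starRingEnd ℂ) (cpow β (coords (zeta hm u)))) := by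
      ring
    rw [this, hphase]
    ring
  rw [integral_congr_ae (Filter.Eventually.of_forall hpt)] at hstep
  rw [integral_neg] at hstep
  have : -Mo hm μ α β = Mo hm μ α β := hstep
  have h2 : (2 : ℂ) * Mo hm μ α β = 0 := by linear_combination - this
  have := mul_eq_zero.mp h2
  simpa using this

lemma J_unit (hinv : ∀ g : UG m, μ.map (fun u => g * u) = μ)
    (v : EuclideanSpace ℂ (Fin m)) (hv : ‖v‖ = 1) :
    Jint (n := n) hm μ v v = Jint (n := n) hm μ (e1 hm) (e1 hm) := by
  obtain ⟨g, hg⟩ := exists_unitary hm v hv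
  have hF : Continuous fun z : EuclideanSpace ℂ (Fin m) =>
      (inner ℂ v z : ℂ) ^ n * (inner ℂ z v : ℂ) ^ n := by
    refine Continuous.mul ?_ ?_
    · exact ((continuous_const.inner continuous_id)).pow n
    · exact ((continuous_id.inner continuous_const)).pow n
  have hstep := int_invariance hm μ hinv g _ hF
  have hpt : ∀ u : UG m,
      (inner ℂ v (mact (↑g) (zeta hm u)) : ℂ) ^ n * (inner ℂ (mact (↑g) (zeta hm u)) v : ℂ) ^ n
      = (inner ℂ (e1 hm) (zeta hm u) : ℂ) ^ n * (inner ℂ (zeta hm u) (e1 hm) : ℂ) ^ n := by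
    intro u
    have h1 : (inner ℂ v (mact (↑g) (zeta hm u)) : ℂ) = inner ℂ (e1 hm) (zeta hm u) := by
      conv_lhs => rw [← hg]
      exact inner_mact_unitary g (e1 hm) (zeta hm u)
    have h2 : (inner ℂ (mact (↑g) (zeta hm u)) v : ℂ) = inner ℂ (zeta hm u) (e1 hm) := by
      conv_lhs => rw [← hg]
      exact inner_mact_unitary g (zeta hm u) (e1 hm)
    rw [h1, h2]
  rw [integral_congr_ae (Filter.Eventually.of_forall hpt)] at hstep
  rw [Jint, Jint, ← hstep]

lemma J_diag (hinv : ∀ g : UG m, μ.map (fun u => g * u) = μ) (x : EuclideanSpace ℂ (Fin m)) :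
    Jint (n := n) hm μ x x = ((‖x‖ : ℂ)) ^ (2 * n) * Jint (n := n) hm μ (e1 hm) (e1 hm) := by
  by_cases hx : x = 0
  · subst hx
    by_cases hn : n = 0
    · subst hn
      simp [Jint]
    · have h1 : Jint (n := n) hm μ 0 0 = 0 := by
        rw [Jint]
        have : ∀ u : UG m, (inner ℂ (0 : EuclideanSpace ℂ (Fin m)) (zeta hm u) : ℂ) ^ n *
            (inner ℂ (zeta hm u) (0 : EuclideanSpace ℂ (Fin m)) : ℂ) ^ n = 0 := by
          intro u
          rw [inner_zero_left, zero_pow hn, zero_mul]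
        rw [integral_congr_ae (Filter.Eventually.of_forall this), integral_zero]
      rw [h1, norm_zero]
      rw [Complex.ofReal_zero, zero_pow (by omega : 2 * n ≠ 0), zero_mul]
  · set t : ℂ := (‖x‖ : ℂ) with ht
    have htne : t ≠ 0 := by
      rw [ht]
      exact_mod_cast norm_ne_zero_iff.mpr hx
    set v : EuclideanSpace ℂ (Fin m) := t⁻¹ • x with hv
    have hvnorm : ‖v‖ = 1 := by
      rw [hv, norm_smul, norm_inv, ht]
      rw [Complex.norm_real, Real.norm_eq_abs, abs_of_nonneg (norm_nonneg x)]
      field_simp [norm_ne_zero_iff.mpr hx]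
    have hxv : x = t • v := by
      rw [hv, smul_smul, mul_inv_cancel₀ htne, one_smul]
    have hsmul : Jint (n := n) hm μ x x = (t ^ n * t ^ n) * Jint (n := n) hm μ v v := by
      rw [Jint, Jint, ← integral_const_mul]
      refine integral_congr_ae (Filter.Eventually.of_forall fun u => ?_)
      show (inner ℂ x (zeta hm u) : ℂ) ^ n * (inner ℂ (zeta hm u) x : ℂ) ^ n
          = t ^ n * t ^ n * ((inner ℂ v (zeta hm u) : ℂ) ^ n * (inner ℂ (zeta hm u) v : ℂ) ^ n)
      conv_lhs => rw [hxv]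
      rw [inner_smul_left, inner_smul_right, mul_pow, mul_pow]
      have hconj : (starRingEnd ℂ) t = t := by rw [ht]; exact Complex.conj_ofReal _
      rw [hconj]
      ring
    rw [hsmul, J_unit hm μ hinv v hvnorm]
    congr 1
    rw [ht, ← pow_add]
    congr 1
    omega

lemma sum_mult_Mo :
    ∑ α ∈ piAntidiag (univ : Finset (Fin m)) n,
      (Nat.multinomial univ α : ℂ) * Mo hm μ α α = 1 := by
  have hpt : ∀ u : UG m, (1 : ℂ)
      = ∑ α ∈ piAntidiag (univ : Finset (Fin m)) n, (Nat.multinomial univ α : ℂ) *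
          (cpow α (coords (zeta hm u)) * (starRingEnd ℂ) (cpow α (coords (zeta hm u)))) := by
    intro u
    have h1 : (inner ℂ (zeta hm u) (zeta hm u) : ℂ) ^ n = 1 := by
      have hb : (inner ℂ (zeta hm u) (zeta hm u) : ℂ) = ((‖zeta hm u‖ ^ 2 : ℝ) : ℂ) := by
        exact_mod_cast @inner_self_eq_norm_sq_to_K ℂ _ _ _ _ (zeta hm u)
      rw [hb, norm_zeta hm u]
      norm_num
    rw [← h1, inner_pow_expand]
    refine Finset.sum_congr rfl fun α hα => ?_
    rw [cpow_cconj α (zeta hm u)]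
    ring
  have h2 : (1 : ℂ) = ∫ _u : UG m, (1 : ℂ) ∂μ := by
    simp
  rw [h2, integral_congr_ae (Filter.Eventually.of_forall hpt),
    integral_finset_sum _ (fun α hα => ?_)]
  · refine Finset.sum_congr rfl fun α hα => ?_
    rw [Mo, integral_const_mul]
  · exact Integrable.const_mul (integrable_comp hm μ _
      (((continuous_cpow α).mul ((continuous_cpow α).star)))) _

lemma mult_ne_zero (α : Fin m → ℕ) : (Nat.multinomial univ α : ℂ) ≠ 0 := by
  exact_mod_cast (Nat.multinomial_pos _ _).ne'

lemma diag_values (hinv : ∀ g : UG m, μ.map (fun u => g * u) = μ) :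
    ∀ α ∈ piAntidiag (univ : Finset (Fin m)) n,
      (Nat.multinomial univ α : ℂ) * Mo hm μ α α = Jint (n := n) hm μ (e1 hm) (e1 hm) := by
  classical
  set c : ℂ := Jint (n := n) hm μ (e1 hm) (e1 hm) with hc
  have hbound : ∀ α ∈ piAntidiag (univ : Finset (Fin m)) n, ∀ j, α j < n + 1 := by
    intro α hα j
    have h1 := (Finset.mem_piAntidiag.mp hα).1
    have h2 : α j ≤ ∑ i, α i := Finset.single_le_sum (fun i _ => Nat.zero_le _) (mem_univ j)
    have h3 : α j ≤ n := le_trans h2 (le_of_eq h1)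
    omega
  have hkey : ∀ r : Fin m → ℝ, (∀ j, 0 ≤ r j) →
      ∑ α ∈ piAntidiag (univ : Finset (Fin m)) n,
        ((Nat.multinomial univ α : ℂ) ^ 2 * Mo hm μ α α - c * (Nat.multinomial univ α : ℂ)) *
          ∏ j, ((r j : ℂ)) ^ α j = 0 := by
    intro r hr
    set x : EuclideanSpace ℂ (Fin m) :=
      (WithLp.equiv 2 (Fin m → ℂ)).symm (fun j => ((Real.sqrt (r j) : ℝ) : ℂ)) with hx
    have hcoords : ∀ j, coords x j = ((Real.sqrt (r j) : ℝ) : ℂ) := fun j => rfl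
    have hcconj : ∀ j, cconj x j = ((Real.sqrt (r j) : ℝ) : ℂ) := by
      intro j
      show (starRingEnd ℂ) (coords x j) = _
      rw [hcoords j, Complex.conj_ofReal]
    have hprod : ∀ α : Fin m → ℕ,
        cpow α (cconj x) * cpow α (coords x) = ∏ j, ((r j : ℂ)) ^ α j := by
      intro α
      rw [cpow, cpow, ← Finset.prod_mul_distrib]
      refine Finset.prod_congr rfl fun j _ => ?_
      rw [hcconj j, hcoords j, ← mul_pow, ← Complex.ofReal_mul,
        Real.mul_self_sqrt (hr j)]
    have hJ1 : Jint (n := n) hm μ x x = ∑ α ∈ piAntidiag (univ : Finset (Fin m)) n,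
        (Nat.multinomial univ α : ℂ) ^ 2 * Mo hm μ α α * ∏ j, ((r j : ℂ)) ^ α j := by
      rw [J_expand hm μ x x]
      refine Finset.sum_congr rfl fun α hα => ?_
      rw [Finset.sum_eq_single_of_mem α hα (fun β hβ hne => by
        rw [Mo_offdiag hm μ hinv α β (Ne.symm hne), mul_zero])]
      rw [← hprod α]
      ring
    have hnormx : ((‖x‖ : ℂ)) ^ (2 * n) = (∑ j, (r j : ℂ)) ^ n := by
      have h1 : ‖x‖ ^ 2 = ∑ j, r j := by
        rw [EuclideanSpace.norm_eq]
        rw [Real.sq_sqrt (Finset.sum_nonneg fun j _ => sq_nonneg _)]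
        refine Finset.sum_congr rfl fun j _ => ?_
        have : ‖x j‖ = Real.sqrt (r j) := by
          rw [show (x j : ℂ) = ((Real.sqrt (r j) : ℝ) : ℂ) from rfl]
          rw [Complex.norm_real, Real.norm_eq_abs, abs_of_nonneg (Real.sqrt_nonneg _)]
        rw [this, Real.sq_sqrt (hr j)]
      rw [pow_mul, ← Complex.ofReal_pow, h1]
      push_cast
      rfl
    have hJ2 : Jint (n := n) hm μ x x = ∑ α ∈ piAntidiag (univ : Finset (Fin m)) n,
        c * (Nat.multinomial univ α : ℂ) * ∏ j, ((r j : ℂ)) ^ α j := by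
      rw [J_diag hm μ hinv x, hnormx, Finset.sum_pow_eq_sum_piAntidiag, Finset.sum_mul]
      refine Finset.sum_congr rfl fun α hα => ?_
      ring
    have := hJ1.symm.trans hJ2
    rw [← sub_eq_zero] at this
    rw [← this, ← Finset.sum_sub_distrib]
    refine Finset.sum_congr rfl fun α hα => ?_
    ring
  have hext := extract (piAntidiag (univ : Finset (Fin m)) n) (n + 1) hbound _ hkey
  intro α hα
  have h1 := hext α hα
  rw [sub_eq_zero] at h1
  have h2 : (Nat.multinomial univ α : ℂ) * ((Nat.multinomial univ α : ℂ) * Mo hm μ α α)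
      = (Nat.multinomial univ α : ℂ) * c := by
    linear_combination h1
  exact mul_left_cancel₀ (mult_ne_zero α) h2

lemma card_A : (piAntidiag (univ : Finset (Fin m)) n).card = (n + m - 1).choose n := by
  classical
  rw [← Finset.map_sym_eq_piAntidiag, Finset.card_map, Finset.sym_univ, Finset.card_univ,
    Sym.card_sym_eq_choose, Fintype.card_fin, Nat.add_comm]

theorem core (hinv : ∀ g : UG m, μ.map (fun u => g * u) = μ) (x y : EuclideanSpace ℂ (Fin m)) :
    (((n + m - 1).choose n : ℕ) : ℂ) * Jint (n := n) hm μ x y = (inner ℂ y x : ℂ) ^ n := by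
  classical
  set c : ℂ := Jint (n := n) hm μ (e1 hm) (e1 hm) with hc
  have hdv := diag_values (n := n) hm μ hinv
  have hcard : ((piAntidiag (univ : Finset (Fin m)) n).card : ℂ) * c = 1 := by
    rw [← sum_mult_Mo hm μ (n := n)]
    rw [Finset.sum_congr rfl hdv, Finset.sum_const, nsmul_eq_mul]
  have hJ : Jint (n := n) hm μ x y = c * (inner ℂ y x : ℂ) ^ n := by
    rw [J_expand hm μ x y]
    have h1 : ∀ α ∈ piAntidiag (univ : Finset (Fin m)) n,
        ∑ β ∈ piAntidiag (univ : Finset (Fin m)) n,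
          ((Nat.multinomial univ α : ℂ) * cpow α (cconj y)) *
            ((Nat.multinomial univ β : ℂ) * cpow β (coords x)) * Mo hm μ α β
        = c * ((Nat.multinomial univ α : ℂ) * (cpow α (cconj y) * cpow α (coords x))) := by
      intro α hα
      rw [Finset.sum_eq_single_of_mem α hα (fun β hβ hne => by
        rw [Mo_offdiag hm μ hinv α β (Ne.symm hne), mul_zero])]
      have h2 := hdv α hα
      calc ((Nat.multinomial univ α : ℂ) * cpow α (cconj y)) *
            ((Nat.multinomial univ α : ℂ) * cpow α (coords x)) * Mo hm μ α α
          = (cpow α (cconj y) * cpow α (coords x)) * (Nat.multinomial univ α : ℂ) *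
              ((Nat.multinomial univ α : ℂ) * Mo hm μ α α) := by ring
        _ = _ := by rw [h2, ← hc]; ring
    rw [Finset.sum_congr rfl h1, ← Finset.mul_sum, ← inner_pow_expand]
  rw [hJ, ← mul_assoc, ← card_A (m := m) (n := n), hcard, one_mul]

end Core

section Final

variable (hm : 0 < m) [MeasurableSpace (UG m)] [BorelSpace (UG m)]
variable (μ : Measure (UG m)) [IsProbabilityMeasure μ]
variable (M : SymPowModel (EuclideanSpace ℂ (Fin m)) n T)

def tz (u : UG m) : T := M.tpow (zeta hm u)

lemma continuous_tz : Continuous (tz hm M) := (continuous_tpow M).comp (continuous_zeta hm)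

lemma norm_tz (u : UG m) : ‖tz hm M u‖ = 1 := by
  rw [tz, norm_tpow, norm_zeta, one_pow]

lemma integrable_W (a b : T) :
    Integrable (fun u => (inner ℂ a (tz hm M u) : ℂ) * (inner ℂ (tz hm M u) b : ℂ)) μ := by
  have hf : Continuous fun z : EuclideanSpace ℂ (Fin m) =>
      (inner ℂ a (M.tpow z) : ℂ) * (inner ℂ (M.tpow z) b : ℂ) :=
    (continuous_const.inner (continuous_tpow M)).mul
      ((continuous_tpow M).inner continuous_const)
  exact integrable_comp hm μ _ hf

def W (a b : T) : ℂ := ∫ u, (inner ℂ a (tz hm M u) : ℂ) * (inner ℂ (tz hm M u) b : ℂ) ∂μ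

lemma W_conj (a b : T) : (starRingEnd ℂ) (W hm μ M a b) = W hm μ M b a := by
  rw [W, W, ← integral_conj]
  refine integral_congr_ae (Filter.Eventually.of_forall fun u => ?_)
  show (starRingEnd ℂ) ((inner ℂ a (tz hm M u) : ℂ) * (inner ℂ (tz hm M u) b : ℂ))
      = (inner ℂ b (tz hm M u) : ℂ) * (inner ℂ (tz hm M u) a : ℂ)
  rw [map_mul, inner_conj_symm, inner_conj_symm]
  ring

def Vlin (a : T) : T →ₗ[ℂ] ℂ where
  toFun b := W hm μ M a b
  map_add' b₁ b₂ := by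
    show W hm μ M a (b₁ + b₂) = W hm μ M a b₁ + W hm μ M a b₂
    rw [W, W, W, ← integral_add (integrable_W hm μ M a b₁) (integrable_W hm μ M a b₂)]
    refine integral_congr_ae (Filter.Eventually.of_forall fun u => ?_)
    show (inner ℂ a (tz hm M u) : ℂ) * (inner ℂ (tz hm M u) (b₁ + b₂) : ℂ) = _
    rw [inner_add_right]
    ring
  map_smul' r b := by
    show W hm μ M a (r • b) = r * W hm μ M a b
    rw [W, W, ← integral_const_mul]
    refine integral_congr_ae (Filter.Eventually.of_forall fun u => ?_)
    show (inner ℂ a (tz hm M u) : ℂ) * (inner ℂ (tz hm M u) (r • b) : ℂ) = _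
    rw [inner_smul_right]
    ring

lemma Vlin_bound (a b : T) : ‖Vlin hm μ M a b‖ ≤ ‖a‖ * ‖b‖ := by
  have h1 : ∀ u : UG m, ‖(inner ℂ a (tz hm M u) : ℂ) * (inner ℂ (tz hm M u) b : ℂ)‖ ≤ ‖a‖ * ‖b‖ := by
    intro u
    rw [norm_mul]
    have ha : ‖(inner ℂ a (tz hm M u) : ℂ)‖ ≤ ‖a‖ := by
      have := norm_inner_le_norm (𝕜 := ℂ) a (tz hm M u)
      rwa [norm_tz, mul_one] at this
    have hb : ‖(inner ℂ (tz hm M u) b : ℂ)‖ ≤ ‖b‖ := by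
      have := norm_inner_le_norm (𝕜 := ℂ) (tz hm M u) b
      rwa [norm_tz, one_mul] at this
    exact mul_le_mul ha hb (norm_nonneg _) (norm_nonneg _)
  have h2 := norm_integral_le_of_norm_le_const (μ := μ)
    (f := fun u => (inner ℂ a (tz hm M u) : ℂ) * (inner ℂ (tz hm M u) b : ℂ))
    (C := ‖a‖ * ‖b‖) (Filter.Eventually.of_forall h1)
  show ‖∫ u, (inner ℂ a (tz hm M u) : ℂ) * (inner ℂ (tz hm M u) b : ℂ) ∂μ‖ ≤ ‖a‖ * ‖b‖
  simpa [measure_univ] using h2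

def V (a : T) : T →L[ℂ] ℂ := LinearMap.mkContinuous (Vlin hm μ M a) (‖a‖) (Vlin_bound hm μ M a)

lemma V_apply (a b : T) : V hm μ M a b = W hm μ M a b := rfl

lemma ext_total (f g : T →L[ℂ] ℂ) (h : ∀ x, f (M.tpow x) = g (M.tpow x)) : f = g := by
  refine ContinuousLinearMap.ext_on
    (Submodule.dense_iff_topologicalClosure_eq_top.mpr M.total) ?_
  rintro _ ⟨x, rfl⟩
  exact h x

lemma step2 (hinv : ∀ g : UG m, μ.map (fun u => g * u) = μ) (y : EuclideanSpace ℂ (Fin m)) :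
    (((n + m - 1).choose n : ℕ) : ℂ) • V hm μ M (M.tpow y) = innerSL ℂ (M.tpow y) := by
  refine ext_total M _ _ fun x => ?_
  rw [ContinuousLinearMap.smul_apply, innerSL_apply_apply, smul_eq_mul, V_apply]
  have hW : W hm μ M (M.tpow y) (M.tpow x) = Jint (n := n) hm μ x y := by
    rw [W, Jint]
    refine integral_congr_ae (Filter.Eventually.of_forall fun u => ?_)
    simp only [tz, M.inner_tpow]
  rw [hW, M.inner_tpow]
  exact core hm μ hinv x y

lemma step3 (hinv : ∀ g : UG m, μ.map (fun u => g * u) = μ) (b : T) :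
    (((n + m - 1).choose n : ℕ) : ℂ) • V hm μ M b = innerSL ℂ b := by
  refine ext_total M _ _ fun y => ?_
  rw [ContinuousLinearMap.smul_apply, innerSL_apply_apply, smul_eq_mul, V_apply]
  have h2 := congrArg (fun f : T →L[ℂ] ℂ => f b) (step2 hm μ M hinv y)
  simp only [ContinuousLinearMap.smul_apply, innerSL_apply_apply, smul_eq_mul, V_apply] at h2
  have h3 := congrArg (starRingEnd ℂ) h2
  rw [map_mul, map_natCast, W_conj, inner_conj_symm] at h3
  exact h3

end Final

end AvgProof

end
end AuxiliaryLemmas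

/-- for the Haar probability measure `μ` on `U(m)` and
`ψ_ζ(u) = ⟨(u e₁)^{⊗n} ∣ ψ⟩` with `ψ ∈ (ℂᵐ)^{⊙n}`:
`C(n+m-1,n) ∫ φ_ζ · conj(ψ_ζ) dμ = ⟨ψ ∣ φ⟩`
(paper's `⟨a∣b⟩` is Mathlib's `inner ℂ b a`). -/
theorem averaged_inner_product_formula (m n : ℕ) (hm : 0 < m) (T : Type)
    [NormedAddCommGroup T] [InnerProductSpace ℂ T]
    (M : SymPowModel (EuclideanSpace ℂ (Fin m)) n T)
    [MeasurableSpace (Matrix.unitaryGroup (Fin m) ℂ)]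
    [BorelSpace (Matrix.unitaryGroup (Fin m) ℂ)]
    (μ : Measure (Matrix.unitaryGroup (Fin m) ℂ)) [IsProbabilityMeasure μ]
    (hinv : ∀ g : Matrix.unitaryGroup (Fin m) ℂ, μ.map (fun u => g * u) = μ)
    (ψ φ : T) :
    (((n + m - 1).choose n : ℕ) : ℂ) *
        ∫ u : Matrix.unitaryGroup (Fin m) ℂ,
          (inner ℂ φ (M.tpow (Matrix.toEuclideanLin (u : Matrix (Fin m) (Fin m) ℂ)
              (EuclideanSpace.single (⟨0, hm⟩ : Fin m) (1 : ℂ)))) : ℂ) *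
            (starRingEnd ℂ)
              (inner ℂ ψ (M.tpow (Matrix.toEuclideanLin (u : Matrix (Fin m) (Fin m) ℂ)
                (EuclideanSpace.single (⟨0, hm⟩ : Fin m) (1 : ℂ)))) : ℂ) ∂μ =
      (inner ℂ φ ψ : ℂ) := by
  have h3 := AvgProof.step3 (n := n) hm μ M hinv φ
  have h4 := congrArg (fun f : T →L[ℂ] ℂ => f ψ) h3
  simp only [ContinuousLinearMap.smul_apply, innerSL_apply_apply, smul_eq_mul,
    AvgProof.V_apply] at h4
  rw [← h4]
  congr 1
  rw [AvgProof.W]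
  refine integral_congr_ae (Filter.Eventually.of_forall fun u => ?_)
  show (inner ℂ φ (M.tpow (Matrix.toEuclideanLin (u : Matrix (Fin m) (Fin m) ℂ)
          (EuclideanSpace.single (⟨0, hm⟩ : Fin m) (1 : ℂ)))) : ℂ) *
        (starRingEnd ℂ) (inner ℂ ψ (M.tpow (Matrix.toEuclideanLin (u : Matrix (Fin m) (Fin m) ℂ)
          (EuclideanSpace.single (⟨0, hm⟩ : Fin m) (1 : ℂ)))) : ℂ)
      = (inner ℂ φ (AvgProof.tz hm M u) : ℂ) * (inner ℂ (AvgProof.tz hm M u) ψ : ℂ)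
  rw [inner_conj_symm]
  rfl
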